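/- Let G : [0,1] → [0,1] be a measurable function satisfying G(z) = (1 + z·G(G(z))) / 2 for every z ∈ [0,1]. Then for every z ∈ [0,1], G(z) = (−z² + 10z − 3 + √(25−z)·(1−z)^{3/2}) / (2(z+2)). -/
import Mathlib


namespace VEP


noncomputable def fr (x : ℝ) : ℝ :=
  (-x^2 + 10*x - 3 + (1-x) * Real.sqrt ((25-x)*(1-x))) / (2*(x+2))

lemma sq_s {x : ℝ} (hx1 : x ≤ 1) :
    (Real.sqrt ((25-x)*(1-x)))^2 = (25-x)*(1-x) :=
  Real.sq_sqrt (by nlinarith)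

lemma s_le_five {x : ℝ} (hx0 : 0 ≤ x) (hx1 : x ≤ 1) :
    Real.sqrt ((25-x)*(1-x)) ≤ 5 := by
  rw [show (5:ℝ) = Real.sqrt 25 by
    rw [show (25:ℝ) = 5^2 by norm_num, Real.sqrt_sq (by norm_num)]]
  exact Real.sqrt_le_sqrt (by nlinarith)

lemma fr_le_one {x : ℝ} (hx0 : 0 ≤ x) (hx1 : x ≤ 1) : fr x ≤ 1 := by
  set s := Real.sqrt ((25-x)*(1-x)) with hs
  have h5 := s_le_five hx0 hx1
  have h0 : 0 ≤ s := Real.sqrt_nonneg _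
  rw [fr, div_le_one (by nlinarith)]
  nlinarith

lemma half_le_fr {x : ℝ} (hx0 : 0 ≤ x) (hx1 : x ≤ 1) : 1/2 ≤ fr x := by
  set s := Real.sqrt ((25-x)*(1-x)) with hs
  have h2 := sq_s hx1
  have h0 : 0 ≤ s := Real.sqrt_nonneg _
  rw [fr, le_div_iff₀ (by nlinarith)]
  rcases le_or_gt (x^2 - 9*x + 5) 0 with h | h
  · nlinarith
  · have hx58 : x ≤ 5/8 := by nlinarith
    have key : (1-x)*s ≥ x^2 - 9*x + 5 := by
      nlinarith [sq_nonneg ((1-x)*s - (x^2-9*x+5)), mul_nonneg (by linarith : (0:ℝ) ≤ 1-x) h0]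
    nlinarith

lemma sq_ineq {a b c : ℝ} (ha : 0 ≤ a) (hc : 0 ≤ c) (h : a^2 = b^2 + c) :
    0 ≤ b + a := by nlinarith

lemma fe_core (x s w t : ℝ) (hx0 : 0 ≤ x) (hx1 : x ≤ 1)
    (hs2 : s^2 = (25-x)*(1-x)) (hs0 : 0 ≤ s)
    (hw : 2*(x+2)*w = -x^2 + 10*x - 3 + (1-x)*s)
    (hw1 : w ≤ 1) (hwh : 1/2 ≤ w)
    (ht2 : t^2 = (25-w)*(1-w)) (ht0 : 0 ≤ t) :
    x * ((-w^2 + 10*w - 3 + (1-w)*t)/(2*(w+2))) = 2*w - 1 := by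
  have hden : (2*(x+2)) ≠ 0 := by norm_num; linarith
  have hEnum : (2*(x+2))^2 * (2*(2*w-1)*(w+2) - x*(-w^2+10*w-3))
      = 2*x*((x^4-10*x^3-84*x^2+194*x-101) + s*(x^3+3*x^2-27*x+23)) := by
    linear_combination (12 + 16*w + 4*s + 9*x + 12*x*w - 3*x*s - 14*x^2 + 2*x^2*w - 1*x^2*s - 1*x^3) * hw + (4 - 7*x + 2*x^2 + 1*x^3) * hs2
  have h1x : (0:ℝ) ≤ 1 - x := by linarith
  have hq : 0 ≤ x^3+3*x^2-27*x+23 := by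
    nlinarith [mul_nonneg h1x (by nlinarith : (0:ℝ) ≤ 23-4*x-x^2)]
  have ha2 : (s*(x^3+3*x^2-27*x+23))^2
      = (x^4-10*x^3-84*x^2+194*x-101)^2 + 108*(1-x)^3*(x^3+11*x^2+32*x+28) := by
    linear_combination (x^3+3*x^2-27*x+23)^2 * hs2
  have hcub : 0 ≤ 108*(1-x)^3*(x^3+11*x^2+32*x+28) := by
    have h3 : (0:ℝ) ≤ (1-x)^3 := pow_nonneg h1x 3
    nlinarith [h3]
  have hpq := sq_ineq (mul_nonneg hs0 hq) hcub ha2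
  have hE0 : 0 ≤ 2*(2*w-1)*(w+2) - x*(-w^2+10*w-3) := by
    have h1 : 0 ≤ (2*(x+2))^2 * (2*(2*w-1)*(w+2) - x*(-w^2+10*w-3)) := by
      rw [hEnum]; exact mul_nonneg (by linarith) hpq
    have h2 : (0:ℝ) < (2*(x+2))^2 := by positivity
    exact nonneg_of_mul_nonneg_right (by linarith [h1]) h2
  have hpre : (2*(x+2))^4 * (x^2*(1-w)^2*((25-w)*(1-w)))
      = (2*(x+2))^4 * (2*(2*w-1)*(w+2) - x*(-w^2+10*w-3))^2 := by
    linear_combination (1968 + 1472*w - 2304*w^2 - 1024*w^3 + 656*s - 384*s*w - 256*s*w^2 - 48*s^2 - 64*s^2*w - 16*s^3 + 744*x + 896*x*w - 1664*x*w^2 - 2048*x*w^3 - 1288*x*s - 192*x*s*w - 128*x*s*w^2 - 136*x*s^2 + 64*x*s^2*w + 40*x*s^3 - 14696*x^2 + 6576*x^2*w + 704*x^2*w^2 - 1536*x^2*w^3 + 1464*x^2*s + 288*x^2*s*w + 192*x^2*s*w^2 + 328*x^2*s^2 + 48*x^2*s^2*w - 24*x^2*s^3 + 8424*x^3 + 4656*x^3*w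 + 672*x^3*w^2 - 512*x^3*w^3 - 624*x^3*s + 240*x^3*s*w + 160*x^3*s*w^2 - 48*x^3*s^2 - 32*x^3*s^2*w - 8*x^3*s^3 + 896*x^4 - 224*x^4*w + 32*x^4*w^2 - 64*x^4*w^3 - 416*x^4*s + 48*x^4*s*w + 32*x^4*s*w^2 - 104*x^4*s^2 - 16*x^4*s^2*w + 8*x^4*s^3 - 2824*x^5 - 432*x^5*w - 32*x^5*w^2 + 216*x^5*s + 8*x^5*s^2 + 312*x^6 + 16*x^6*w - 8*x^6*s - 8*x^7) * hw + (400 - 16*s^2 - 200*x - 368*x*s + 56*x*s^2 - 2616*x^2 + 952*x^2*s - 64*x^2*s^2 + 3592*x^3 - 632*x^3*s + 16*x^3*s^2 - 368*x^4 - 136*x^4*s + 16*x^4*s^2 - 984*x^5 + 200*x^5*s - 8*x^5*s^2 + 184*x^6 - 16*x^6*s - 8*x^7) * hs2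
  have hsq : x^2*(1-w)^2*((25-w)*(1-w))
      = (2*(2*w-1)*(w+2) - x*(-w^2+10*w-3))^2 :=
    mul_left_cancel₀ (pow_ne_zero 4 hden) hpre
  have hL : x*(1-w)*t = 2*(2*w-1)*(w+2) - x*(-w^2+10*w-3) := by
    have hLnn : 0 ≤ x*(1-w)*t :=
      mul_nonneg (mul_nonneg hx0 (by linarith)) ht0
    have hsq2 : (x*(1-w)*t)^2 = (2*(2*w-1)*(w+2) - x*(-w^2+10*w-3))^2 := by
      linear_combination hsq + (x^2*(1-w)^2) * ht2
    calc x*(1-w)*t = Real.sqrt ((x*(1-w)*t)^2) := (Real.sqrt_sq hLnn).symm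
      _ = Real.sqrt ((2*(2*w-1)*(w+2) - x*(-w^2+10*w-3))^2) := by rw [hsq2]
      _ = _ := Real.sqrt_sq hE0
  have hwden : (2*(w+2)) ≠ 0 := by norm_num; linarith
  rw [← mul_div_assoc, div_eq_iff hwden]
  linear_combination hL

lemma fr_fe {x : ℝ} (hx0 : 0 ≤ x) (hx1 : x ≤ 1) :
    x * fr (fr x) = 2 * fr x - 1 := by
  have hw1 : fr x ≤ 1 := fr_le_one hx0 hx1
  have hwh : 1/2 ≤ fr x := half_le_fr hx0 hx1
  have hden : (2*(x+2)) ≠ 0 := by norm_num; linarith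
  have hw : 2*(x+2)*(fr x) = -x^2 + 10*x - 3 + (1-x)*Real.sqrt ((25-x)*(1-x)) := by
    rw [fr]; field_simp
  have := fe_core x (Real.sqrt ((25-x)*(1-x))) (fr x) (Real.sqrt ((25-(fr x))*(1-(fr x))))
    hx0 hx1 (sq_s hx1) (Real.sqrt_nonneg _) hw hw1 hwh (sq_s hw1) (Real.sqrt_nonneg _)
  rw [show fr (fr x) = (-(fr x)^2 + 10*(fr x) - 3 + (1-(fr x)) * Real.sqrt ((25-(fr x))*(1-(fr x)))) / (2*((fr x)+2)) from rfl]
  exact this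



lemma le_of_fes (G F : Set.Icc (0:ℝ) 1 → Set.Icc (0:ℝ) 1)
    (hG : ∀ z, (G z : ℝ) = (1 + (z:ℝ) * (G (G z) : ℝ))/2)
    (hF : ∀ z, (F z : ℝ) = (1 + (z:ℝ) * (F (F z) : ℝ))/2)
    (z : Set.Icc (0:ℝ) 1) : (G z : ℝ) ≤ (F z : ℝ) := by
  by_contra hlt
  push_neg at hlt
  set ε : ℝ := (G z : ℝ) - (F z : ℝ) with hε
  have hε0 : 0 < ε := by rw [hε]; exact sub_pos.mpr hlt
  set g : ℕ → Set.Icc (0:ℝ) 1 := fun n => G^[n] z with hg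
  set h : ℕ → Set.Icc (0:ℝ) 1 := fun n => F^[n] z with hh
  have hgs : ∀ n, g (n+1) = G (g n) := fun n => Function.iterate_succ_apply' G n z
  have hhs : ∀ n, h (n+1) = F (h n) := fun n => Function.iterate_succ_apply' F n z
  have kg : ∀ n, ((g n : ℝ)) * ((g (n+2) : ℝ)) = 2*((g (n+1) : ℝ)) - 1 := by
    intro n
    have h1 := hG (g n)
    rw [← hgs n] at h1
    have h2 : G (g (n+1)) = g (n+2) := (hgs (n+1)).symm
    rw [h2] at h1
    linarith
  have kh : ∀ n, ((h n : ℝ)) * ((h (n+2) : ℝ)) = 2*((h (n+1) : ℝ)) - 1 := by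
    intro n
    have h1 := hF (h n)
    rw [← hhs n] at h1
    have h2 : F (h (n+1)) = h (n+2) := (hhs (n+1)).symm
    rw [h2] at h1
    linarith
  have main : ∀ n, 0 ≤ (g n : ℝ) - (h n : ℝ) ∧
      ((g n : ℝ) - (h n : ℝ)) + ε ≤ (g (n+1) : ℝ) - (h (n+1) : ℝ) := by
    intro n
    induction n with
    | zero =>
      have e1 : g 1 = G z := by rw [hgs 0]; rfl
      have e1' : h 1 = F z := by rw [hhs 0]; rfl
      constructor
      · show (0:ℝ) ≤ (z:ℝ) - (z:ℝ)
        simp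
      · show ((z:ℝ) - (z:ℝ)) + ε ≤ (g 1 : ℝ) - (h 1 : ℝ)
        rw [e1, e1', hε]
        linarith
    | succ n ih =>
      obtain ⟨ih1, ih2⟩ := ih
      have e1 : (g n : ℝ) * (((g (n+2) : ℝ)) - ((h (n+2) : ℝ)))
          = 2*(((g (n+1) : ℝ)) - ((h (n+1) : ℝ))) - ((h (n+2) : ℝ)) * (((g n : ℝ)) - ((h n : ℝ))) := by
        linear_combination kg n - kh n
      have hb1 : (h (n+2) : ℝ) ≤ 1 := (h (n+2)).2.2
      have hb2 : 0 ≤ (h (n+2) : ℝ) := (h (n+2)).2.1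
      have hb3 : 0 ≤ (g n : ℝ) := (g n).2.1
      have hb4 : (g n : ℝ) ≤ 1 := (g n).2.2
      have e2 : ((g (n+1) : ℝ) - (h (n+1) : ℝ)) + ε ≤ (g n : ℝ) * (((g (n+2) : ℝ)) - ((h (n+2) : ℝ))) := by
        nlinarith [e1, ih1, ih2, hb1, hb2]
      have e3 : 0 < ((g (n+2) : ℝ)) - ((h (n+2) : ℝ)) := by
        nlinarith [e2, hb3, hb4, ih1, ih2, hε0]
      constructor
      · linarith
      · nlinarith [e2, e3, hb4]
  have grow : ∀ n : ℕ, (n : ℝ) * ε ≤ (g n : ℝ) - (h n : ℝ) := by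
    intro n
    induction n with
    | zero => simp [hg, hh]
    | succ n ih =>
      obtain ⟨_, h2⟩ := main n
      push_cast
      nlinarith [h2, ih]
  obtain ⟨n, hn⟩ := exists_nat_gt (1/ε)
  have h1 : (g n : ℝ) - (h n : ℝ) ≤ 1 := by
    have := (g n).2.2
    have := (h n).2.1
    linarith
  have h2 := grow n
  have : (1:ℝ) < n * ε := by
    rw [div_lt_iff₀ hε0] at hn
    linarith
  linarith


noncomputable def Ffun : Set.Icc (0:ℝ) 1 → Set.Icc (0:ℝ) 1 := fun z =>
  ⟨fr z, Set.mem_Icc.mpr ⟨by have := half_le_fr z.2.1 z.2.2; linarith, fr_le_one z.2.1 z.2.2⟩⟩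

lemma Ffun_fe : ∀ z : Set.Icc (0:ℝ) 1, (Ffun z : ℝ) = (1 + (z:ℝ) * (Ffun (Ffun z) : ℝ))/2 := by
  intro z
  show fr (z:ℝ) = (1 + (z:ℝ) * fr (fr (z:ℝ)))/2
  have := fr_fe z.2.1 z.2.2
  linarith

lemma rpow_eq {z : ℝ} (h0 : 0 ≤ z) (h1 : z ≤ 1) :
    Real.sqrt (25-z) * (1-z)^((3:ℝ)/2) = (1-z) * Real.sqrt ((25-z)*(1-z)) := by
  have h1z : (0:ℝ) ≤ 1 - z := by linarith
  have h25 : (0:ℝ) ≤ 25 - z := by linarith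
  rw [show ((3:ℝ)/2) = 1 + 1/2 by norm_num]
  rcases eq_or_lt_of_le h1z with he | hp
  · rw [← he, Real.zero_rpow (by norm_num)]
    simp
  · rw [Real.rpow_add hp, Real.rpow_one, ← Real.sqrt_eq_rpow, Real.sqrt_mul h25]
    ring

/-- Uniqueness of the measurable solution on `[0,1]` of the functional equation
`G(z) = (1 + z·G(G(z))) / 2`: any such solution is the explicit function `g₄`. -/
theorem g4_uniqueness (G : Set.Icc (0 : ℝ) 1 → Set.Icc (0 : ℝ) 1) (hG : Measurable G)
    (hfe : ∀ z : Set.Icc (0 : ℝ) 1, (G z : ℝ) = (1 + (z : ℝ) * (G (G z) : ℝ)) / 2) :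
    ∀ z : Set.Icc (0 : ℝ) 1,
      (G z : ℝ)
        = (-(z : ℝ) ^ 2 + 10 * (z : ℝ) - 3
            + Real.sqrt (25 - (z : ℝ)) * (1 - (z : ℝ)) ^ ((3 : ℝ) / 2))
          / (2 * ((z : ℝ) + 2)) := by
  intro z
  obtain ⟨hz0, hz1⟩ := z.2
  have h1 : (G z : ℝ) = (Ffun z : ℝ) :=
    le_antisymm (le_of_fes G Ffun hfe Ffun_fe z) (le_of_fes Ffun G Ffun_fe hfe z)
  rw [h1, rpow_eq hz0 hz1]
  show fr (z:ℝ) = _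
  rw [fr]

end VEP
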